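/- Let X_* be a chain complex with differential l_1 acyclic in positive degrees, with contracting homotopy ρ (so l_1 ρ + ρ l_1 = Id in positive degrees). Let d be a coderivation on the graded symmetric coalgebra ΛsX_* determined by a map of resolution degree k > 0, and suppose [l̂_1, d̂] = 0 where l̂_1 is the coderivation extension of l_1 and [·,·] is the graded commutator. Then there exists a coderivation t̂ of resolution degree k+1 with d̂ = [l̂_1, t̂]. -/
import Mathlib

/-!
STATEMENT 2.  Acyclicity of `l1` in positive (resolution) degree, with
contracting homotopy `ρ` (`l1 ρ + ρ l1 = id` in positive degree), implies
acyclicity of the adjoint action `[l̂1, ·]` on coderivations of positive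
resolution degree `k`.  A coderivation of `ΛsX` determined by a map of
`Λᵏ sX` to `sX` is encoded at the level of (co)generators: `M r` is the
resolution-degree-`r` component of `Λᵏ sX`, `D` is the restriction of the
coderivation extension `l̂1` to `ΛsX` (lowering resolution degree by one),
`d : M r → X (k + r)` is the determining map of resolution degree `k`, and the
cocycle condition `[l̂1, d̂] = 0` projected to cogenerators reads
`l1 ∘ d = d ∘ D` (signs absorbed in the conventions).  The conclusion is the
homotopy `t = ρ ∘ d`, of resolution degree `k + 1`, with `d̂ = [l̂1, t̂]`,
i.e. on generators `d = l1 ∘ t + t ∘ D`.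
-/
theorem stmt2
    (X : ℕ → Type) [∀ i, AddCommGroup (X i)] [∀ i, Module ℝ (X i)]
    (M : ℕ → Type) [∀ i, AddCommGroup (M i)] [∀ i, Module ℝ (M i)]
    (l1 : ∀ r, X (r + 1) →ₗ[ℝ] X r)
    (hdd : ∀ r (x : X (r + 2)), l1 r (l1 (r + 1) x) = 0)
    (ρ : ∀ r, X r →ₗ[ℝ] X (r + 1))
    (hhtpy : ∀ r (x : X (r + 1)), l1 (r + 1) (ρ (r + 1) x) + ρ r (l1 r x) = x)
    (k : ℕ) (hk : 0 < k)
    (D : ∀ r, M (r + 1) →ₗ[ℝ] M r)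
    (d : ∀ r, M r →ₗ[ℝ] X (k + r))
    (hcocycle : ∀ r (ξ : M (r + 1)), l1 (k + r) (d (r + 1) ξ) = d r (D r ξ)) :
    ∃ t : ∀ r, M r →ₗ[ℝ] X (k + r + 1),
      (∀ r (ξ : M r), t r ξ = ρ (k + r) (d r ξ)) ∧
      (∀ r (ξ : M (r + 1)),
        d (r + 1) ξ = l1 (k + r + 1) (t (r + 1) ξ) + t r (D r ξ)) := by
  refine ⟨fun r => (ρ (k + r)).comp (d r), fun r ξ => rfl, fun r ξ => ?_⟩
  have h := hhtpy (k + r) (d (r + 1) ξ)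
  have hc := hcocycle r ξ
  simp only [LinearMap.comp_apply]
  rw [← hc]
  exact h.symm
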